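/- Let S_Z be an orbital fuzzy iterated function system and u ∈ F*_S. Then for every α ∈ (0,1], the α-level set of the pointwise supremum ∨_{x∈[u]^*} u_x equals the union of the α-level sets: [∨_{x∈[u]^*} u_x]^α = ⋃_{x∈[u]^*} [u_x]^α. -/

import Mathlib

open Metric Filter Topology Set

/-- The orbit of a point `x` under the family of maps `f i`:
`x` together with all images of `x` under finite compositions of the `f i`. -/
def orbitIFS {X I : Type*} (f : I → X → X) (x : X) : Set X :=
  ⋃ l : List I, {l.foldr (fun i y => f i y) x}

/-- The fractal (Hutchinson–Barnsley) operator `K ↦ ⋃ i, f i '' K`. -/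
def fractalOp {X I : Type*} (f : I → X → X) (K : Set X) : Set X :=
  ⋃ i, f i '' K

/-- Image of a fuzzy set under a map: `f(u)(y) = sup_{x ∈ f⁻¹ y} u x` (0 if empty). -/
noncomputable def fuzzyImage {X : Type*} (g : X → X) (u : X → ℝ) : X → ℝ :=
  fun y => sSup (u '' (g ⁻¹' {y}))

/-- The fuzzy Hutchinson–Barnsley operator `Z(u) = ∨ i, ρ i (f i (u))`. -/
noncomputable def Zop {X I : Type*} (f : I → X → X) (ρ : I → ℝ → ℝ) (u : X → ℝ) : X → ℝ :=
  fun y => ⨆ i, ρ i (fuzzyImage (f i) u y)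

/-- The metric `d_∞(u,v) = sup_{α ∈ (0,1]} h([u]^α, [v]^α)`. -/
noncomputable def dInfty {X : Type*} [MetricSpace X] (u v : X → ℝ) : ℝ :=
  ⨆ α : Ioc (0:ℝ) 1, hausdorffDist {x | (α:ℝ) ≤ u x} {x | (α:ℝ) ≤ v x}

/-- The support of a fuzzy set: the closure of `{x | 0 < u x}`. -/
def fsupp {X : Type*} [MetricSpace X] (u : X → ℝ) : Set X := closure {x | 0 < u x}

/-- The crisp fuzzy point `δ_s`. -/
def fdelta {X : Type*} [DecidableEq X] (s : X) : X → ℝ := fun t => if t = s then 1 else 0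

/-- `u^x` : the restriction of `u` to the closure of the orbit of `w` (zero outside). -/
noncomputable def restrictO {X I : Type*} [MetricSpace X] (f : I → X → X) (u : X → ℝ)
    (w : X) : X → ℝ :=
  (closure (orbitIFS f w)).indicator u

/-- A normal compactly supported fuzzy set (with values in `[0,1]`). -/
def IsFuzzyN {X : Type*} [MetricSpace X] (u : X → ℝ) : Prop :=
  (∀ x, u x ∈ Icc (0:ℝ) 1) ∧ (∃ x, u x = 1) ∧ IsCompact (fsupp u)

/-- An upper semicontinuous normal compactly supported fuzzy set: membership in `F*_X`. -/
def IsFuzzyStar {X : Type*} [MetricSpace X] (u : X → ℝ) : Prop :=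
  IsFuzzyN u ∧ UpperSemicontinuous u

/-- Membership in `F*_S`: for each point of positive membership there is an orbit
containing it together with a point of membership one. -/
def InFS {X I : Type*} [MetricSpace X] (f : I → X → X) (u : X → ℝ) : Prop :=
  IsFuzzyStar u ∧ ∀ x, 0 < u x → ∃ w y, x ∈ orbitIFS f w ∧ y ∈ orbitIFS f w ∧ u y = 1

/-- The orbital contraction condition. -/
def OrbitalContr {X I : Type*} [MetricSpace X] (f : I → X → X) (C : ℝ) : Prop :=
  ∀ i x, ∀ y ∈ orbitIFS f x, ∀ z ∈ orbitIFS f x, dist (f i y) (f i z) ≤ C * dist y z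

/-- An admissible system of grey level maps. -/
def Admissible {I : Type*} (ρ : I → ℝ → ℝ) : Prop :=
  (∀ i, ρ i 0 = 0) ∧ (∀ i, MonotoneOn (ρ i) (Icc (0:ℝ) 1)) ∧
  (∀ i, ∀ t ∈ Icc (0:ℝ) 1, ContinuousWithinAt (ρ i) (Ici t) t) ∧
  (∀ i, ∀ t ∈ Icc (0:ℝ) 1, ρ i t ∈ Icc (0:ℝ) 1) ∧ (∃ j, ρ j 1 = 1)

section Words
variable {X I : Type*} (f : I → X → X) (ρ : I → ℝ → ℝ)

/-- apply the word `l` of maps -/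
def wmap (l : List I) (x : X) : X := l.foldr (fun i y => f i y) x

/-- the grey level of a word -/
noncomputable def greyC : List I → ℝ
  | [] => 1
  | i :: t => ρ i (greyC t)

@[simp] lemma wmap_nil (x : X) : wmap f [] x = x := rfl
@[simp] lemma wmap_cons (i : I) (l : List I) (x : X) :
    wmap f (i :: l) x = f i (wmap f l x) := rfl
lemma wmap_append (l₁ l₂ : List I) (x : X) :
    wmap f (l₁ ++ l₂) x = wmap f l₁ (wmap f l₂ x) := List.foldr_append ..

@[simp] lemma greyC_nil : greyC ρ ([] : List I) = 1 := rfl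
@[simp] lemma greyC_cons (i : I) (l : List I) : greyC ρ (i :: l) = ρ i (greyC ρ l) := rfl

variable {ρ} (hρ : Admissible ρ)
include hρ

lemma greyC_mem (l : List I) : greyC ρ l ∈ Icc (0:ℝ) 1 := by
  induction l with
  | nil => exact ⟨zero_le_one, le_refl 1⟩
  | cons i t ih => exact hρ.2.2.2.1 i _ ih

lemma greyC_append_le (l₁ l₂ : List I) : greyC ρ (l₁ ++ l₂) ≤ greyC ρ l₁ := by
  induction l₁ with
  | nil => exact (greyC_mem hρ l₂).2
  | cons i t ih =>
      simpa using hρ.2.1 i (greyC_mem hρ (t ++ l₂)) (greyC_mem hρ t) ih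

lemma greyC_append_one (l₁ l₂ : List I) (h : greyC ρ l₂ = 1) :
    greyC ρ (l₁ ++ l₂) = greyC ρ l₁ := by
  induction l₁ with
  | nil => simpa using h
  | cons i t ih => simp [ih]

lemma greyC_replicate {j : I} (hj : ρ j 1 = 1) (n : ℕ) :
    greyC ρ (List.replicate n j) = 1 := by
  induction n with
  | zero => rfl
  | succ n ih => rw [List.replicate_succ]; simp [ih, hj]

end Words

section Orbit
variable {X I : Type*} (f : I → X → X)

lemma wmap_mem_orbit (l : List I) (x : X) : wmap f l x ∈ orbitIFS f x :=
  Set.mem_iUnion.2 ⟨l, rfl⟩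

lemma orbit_eq_wmap {x w : X} : w ∈ orbitIFS f x ↔ ∃ l : List I, wmap f l x = w := by
  simp [orbitIFS, wmap, eq_comm]

lemma finiteWords (I : Type*) [Finite I] (n : ℕ) : {l : List I | l.length = n}.Finite := by
  classical
  refine Set.Finite.subset (Set.finite_range (fun v : Fin n → I => List.ofFn v)) ?_
  intro l hl
  simp only [Set.mem_setOf_eq] at hl
  subst hl
  exact ⟨fun i => l.get i, List.ofFn_get l⟩

end Orbit


section Iterates
variable {X I : Type*} [DecidableEq X] [Finite I] [Nonempty I]
variable (f : I → X → X) {ρ : I → ℝ → ℝ} (hρ : Admissible ρ)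

/-- the Picard iterates starting at `δ_x` -/
noncomputable def vIt (n : ℕ) (x : X) : X → ℝ := (Zop f ρ)^[n] (fdelta x)

omit [Finite I] [Nonempty I] in
@[simp] lemma vIt_zero (x : X) : vIt f (ρ := ρ) 0 x = fdelta x := rfl

omit [Finite I] [Nonempty I] in
lemma vIt_succ (n : ℕ) (x : X) :
    vIt f (ρ := ρ) (n+1) x = Zop f ρ (vIt f (ρ := ρ) n x) :=
  Function.iterate_succ_apply' ..

lemma fdelta_mem (x z : X) : fdelta x z ∈ Icc (0:ℝ) 1 := by
  unfold fdelta; split <;> simp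

lemma term_le_Zop (w : X → ℝ) (z : X) (i : I) :
    ρ i (fuzzyImage (f i) w z) ≤ Zop f ρ w z := by
  unfold Zop
  exact le_ciSup (f := fun i => ρ i (fuzzyImage (f i) w z)) (Set.Finite.bddAbove (Set.finite_range _)) i

include hρ

omit [Finite I] [Nonempty I] in
lemma fuzzyImage_mem {w : X → ℝ} (hw : ∀ z, w z ∈ Icc (0:ℝ) 1) (i : I) (z : X) :
    fuzzyImage (f i) w z ∈ Icc (0:ℝ) 1 := by
  unfold fuzzyImage
  rcases (w '' (f i ⁻¹' {z})).eq_empty_or_nonempty with h | h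
  · rw [h, Real.sSup_empty]; exact ⟨le_refl 0, zero_le_one⟩
  · constructor
    · obtain ⟨a, b, hb, rfl⟩ := h
      exact le_trans (hw b).1 (le_csSup ⟨1, by rintro r ⟨c, _, rfl⟩; exact (hw c).2⟩ ⟨b, hb, rfl⟩)
    · exact csSup_le h (by rintro r ⟨b, _, rfl⟩; exact (hw b).2)

omit [Finite I] [Nonempty I] in
lemma le_fuzzyImage {w : X → ℝ} (hw : ∀ z, w z ∈ Icc (0:ℝ) 1) (i : I) (a : X) :
    w a ≤ fuzzyImage (f i) w (f i a) := by
  unfold fuzzyImage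
  exact le_csSup ⟨1, by rintro r ⟨c, _, rfl⟩; exact (hw c).2⟩ ⟨a, rfl, rfl⟩

lemma Zop_mem {w : X → ℝ} (hw : ∀ z, w z ∈ Icc (0:ℝ) 1) (z : X) :
    Zop f ρ w z ∈ Icc (0:ℝ) 1 := by
  have key : ∀ i, ρ i (fuzzyImage (f i) w z) ∈ Icc (0:ℝ) 1 := fun i =>
    hρ.2.2.2.1 i _ (fuzzyImage_mem f hρ hw i z)
  constructor
  · obtain ⟨i⟩ := ‹Nonempty I›
    exact le_trans (key i).1 (term_le_Zop f w z i)
  · exact ciSup_le fun i => (key i).2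

lemma vIt_mem (n : ℕ) (x z : X) : vIt f (ρ := ρ) n x z ∈ Icc (0:ℝ) 1 := by
  induction n generalizing z with
  | zero => exact fdelta_mem x z
  | succ n ih => rw [vIt_succ]; exact Zop_mem f hρ ih z

/-- lower bound along a word -/
lemma vIt_ge_greyC (l : List I) (z : X) :
    greyC ρ l ≤ vIt f (ρ := ρ) l.length z (wmap f l z) := by
  induction l with
  | nil => simp [fdelta]
  | cons i t ih =>
      rw [List.length_cons, vIt_succ]
      have h1 : greyC ρ t ≤ fuzzyImage (f i) (vIt f (ρ := ρ) t.length z) (f i (wmap f t z)) :=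
        le_trans ih (le_fuzzyImage f hρ (vIt_mem f hρ t.length z) i (wmap f t z))
      have hmem := fuzzyImage_mem f hρ (vIt_mem f hρ t.length z) i (f i (wmap f t z))
      calc greyC ρ (i :: t) = ρ i (greyC ρ t) := rfl
        _ ≤ ρ i (fuzzyImage (f i) (vIt f (ρ := ρ) t.length z) (f i (wmap f t z))) :=
            hρ.2.1 i (greyC_mem hρ t) hmem h1
        _ ≤ _ := by
            simp only [wmap_cons]
            exact term_le_Zop f _ _ i

/-- the range of the iterates -/
lemma vIt_range (n : ℕ) (z q : X) :
    vIt f (ρ := ρ) n z q = 0 ∨ ∃ l : List I, l.length = n ∧ wmap f l z = q ∧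
      vIt f (ρ := ρ) n z q = greyC ρ l := by
  induction n generalizing q with
  | zero =>
      by_cases h : q = z
      · exact Or.inr ⟨[], rfl, by simp [h], by simp [h, fdelta]⟩
      · exact Or.inl (by simp [fdelta, h])
  | succ n ih =>
      rw [vIt_succ]
      obtain ⟨i₀, hi₀⟩ := Finite.exists_max (fun i => ρ i (fuzzyImage (f i) (vIt f (ρ := ρ) n z) q))
      have hsup : Zop f ρ (vIt f (ρ := ρ) n z) q
          = ρ i₀ (fuzzyImage (f i₀) (vIt f (ρ := ρ) n z) q) := by
        refine le_antisymm ?_ (term_le_Zop f _ _ i₀)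
        unfold Zop; exact ciSup_le hi₀
      rw [hsup]
      rcases (vIt f (ρ := ρ) n z '' (f i₀ ⁻¹' {q})).eq_empty_or_nonempty with h | h
      · left
        have : fuzzyImage (f i₀) (vIt f (ρ := ρ) n z) q = 0 := by
          unfold fuzzyImage; rw [h, Real.sSup_empty]
        rw [this, hρ.1 i₀]
      · have hfin : (vIt f (ρ := ρ) n z '' (f i₀ ⁻¹' {q})).Finite := by
          apply Set.Finite.subset (Set.Finite.insert 0
            ((Set.Finite.image (greyC ρ) (finiteWords I n))))
          rintro r ⟨b, _, rfl⟩
          rcases ih b with h0 | ⟨l, hl, _, hv⟩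
          · exact Or.inl h0
          · exact Or.inr ⟨l, hl, hv.symm⟩
        obtain ⟨w, hw, hwv⟩ : ∃ w ∈ f i₀ ⁻¹' {q}, vIt f (ρ := ρ) n z w
            = fuzzyImage (f i₀) (vIt f (ρ := ρ) n z) q := by
          have := h.csSup_mem hfin
          obtain ⟨w, hw, hwv⟩ := this
          exact ⟨w, hw, hwv⟩
        rw [← hwv]
        rcases ih w with h0 | ⟨l, hl, hwl, hv⟩
        · left; rw [h0, hρ.1 i₀]
        · right
          refine ⟨i₀ :: l, by simp [hl], ?_, by rw [hv, greyC_cons]⟩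
          simp only [wmap_cons, hwl]
          exact hw

/-- representation lemma: positive levels come from words -/
lemma vIt_repr {n : ℕ} {z q : X} {β : ℝ} (hβ : 0 < β) (h : β ≤ vIt f (ρ := ρ) n z q) :
    ∃ l : List I, l.length = n ∧ wmap f l z = q ∧ β ≤ greyC ρ l := by
  rcases vIt_range f hρ n z q with h0 | ⟨l, hl, hq, hv⟩
  · exact absurd (lt_of_lt_of_le hβ h) (by rw [h0]; exact lt_irrefl 0)
  · exact ⟨l, hl, hq, by rw [← hv]; exact h⟩

end Iterates

section Geom
variable {X I : Type*} [MetricSpace X] [Finite I] [Nonempty I]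
variable {f : I → X → X} {C : ℝ} (hC0 : 0 ≤ C) (hC1 : C < 1) (horb : OrbitalContr f C)

include hC0 horb in
lemma wmap_contract (x : X) (l : List I) {w w' : X}
    (hw : w ∈ orbitIFS f x) (hw' : w' ∈ orbitIFS f x) :
    dist (wmap f l w) (wmap f l w') ≤ C ^ l.length * dist w w' := by
  induction l with
  | nil => simp
  | cons i t ih =>
      obtain ⟨lw, rfl⟩ := (orbit_eq_wmap f).1 hw
      obtain ⟨lw', rfl⟩ := (orbit_eq_wmap f).1 hw'
      have m1 : wmap f t (wmap f lw x) ∈ orbitIFS f x := by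
        rw [← wmap_append]; exact wmap_mem_orbit f _ x
      have m2 : wmap f t (wmap f lw' x) ∈ orbitIFS f x := by
        rw [← wmap_append]; exact wmap_mem_orbit f _ x
      calc dist (wmap f (i :: t) (wmap f lw x)) (wmap f (i :: t) (wmap f lw' x))
          ≤ C * dist (wmap f t (wmap f lw x)) (wmap f t (wmap f lw' x)) := by
            simp only [wmap_cons]; exact horb i x _ m1 _ m2
        _ ≤ C * (C ^ t.length * dist (wmap f lw x) (wmap f lw' x)) :=
            mul_le_mul_of_nonneg_left ih hC0
        _ = C ^ (i :: t).length * dist (wmap f lw x) (wmap f lw' x) := by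
            rw [List.length_cons, pow_succ]; ring

include hC0 hC1 horb in
lemma orbit_bound (x : X) : ∃ R : ℝ, 0 ≤ R ∧ ∀ l : List I, dist x (wmap f l x) ≤ R := by
  obtain ⟨i₀, hi₀⟩ := Finite.exists_max (fun i => dist x (f i x))
  set M := dist x (f i₀ x) with hM
  have hM0 : 0 ≤ M := dist_nonneg
  have h1C : 0 < 1 - C := by linarith
  refine ⟨M / (1 - C), div_nonneg hM0 h1C.le, ?_⟩
  intro l
  induction l with
  | nil => simp [div_nonneg hM0 h1C.le]
  | cons i t ih =>
      have step : dist x (wmap f (i :: t) x) ≤ M + C * dist x (wmap f t x) := by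
        calc dist x (wmap f (i :: t) x) ≤ dist x (f i x) + dist (f i x) (f i (wmap f t x)) := by
              simpa [wmap_cons] using dist_triangle x (f i x) (f i (wmap f t x))
          _ ≤ M + C * dist x (wmap f t x) := by
              gcongr
              · exact hi₀ i
              · exact horb i x x (wmap_mem_orbit f [] x) _ (wmap_mem_orbit f t x)
      have : M + C * dist x (wmap f t x) ≤ M + C * (M / (1 - C)) := by
        gcongr
      refine le_trans step (le_trans this (le_of_eq ?_))
      field_simp
      ring


include hC0 hC1 horb in
lemma orbit_pair_bound (x : X) : ∃ D : ℝ, 0 ≤ D ∧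
    ∀ w ∈ orbitIFS f x, ∀ w' ∈ orbitIFS f x, dist w w' ≤ D := by
  obtain ⟨R, hR0, hR⟩ := orbit_bound hC0 hC1 horb x
  refine ⟨2 * R, by linarith, ?_⟩
  intro w hw w' hw'
  obtain ⟨l, rfl⟩ := (orbit_eq_wmap f).1 hw
  obtain ⟨l', rfl⟩ := (orbit_eq_wmap f).1 hw'
  calc dist (wmap f l x) (wmap f l' x) ≤ dist (wmap f l x) x + dist x (wmap f l' x) :=
        dist_triangle _ _ _
    _ ≤ R + R := by rw [dist_comm]; exact add_le_add (hR l) (hR l')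
    _ = 2 * R := by ring

end Geom

section Cont
variable {X I : Type*} [MetricSpace X]
variable {f : I → X → X} (hcont : ∀ i, Continuous (f i))

include hcont in
lemma wmap_continuous (l : List I) : Continuous (wmap f l) := by
  induction l with
  | nil => exact continuous_id
  | cons i t ih => exact (hcont i).comp ih

include hcont in
lemma cont_unif (y : X) (s : Set (List I)) (hs : s.Finite) {ε : ℝ} (hε : 0 < ε) :
    ∃ δ > 0, ∀ p, dist y p < δ → ∀ l ∈ s, dist (wmap f l y) (wmap f l p) < ε := by
  refine Set.Finite.induction_on (motive := fun s _ => ∃ δ > 0, ∀ p, dist y p < δ →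
      ∀ l ∈ s, dist (wmap f l y) (wmap f l p) < ε) s hs ⟨1, one_pos, by simp⟩ ?_
  rintro a s - - ⟨δ₁, hδ₁, h₁⟩
  · {
      have := ((wmap_continuous hcont a).continuousAt (x := y))
      rw [Metric.continuousAt_iff] at this
      obtain ⟨δ₂, hδ₂, h₂⟩ := this ε hε
      refine ⟨min δ₁ δ₂, lt_min hδ₁ hδ₂, ?_⟩
      intro p hp l hl
      rcases hl with rfl | hl
      · have := h₂ (show dist p y < δ₂ by rw [dist_comm]; exact (lt_of_lt_of_le hp (min_le_right _ _)))
        rwa [dist_comm]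
      · exact h₁ p (lt_of_lt_of_le hp (min_le_left _ _)) l hl }

end Cont


section Level
variable {X : Type*} [MetricSpace X] {g : X → ℝ}

lemma levelG_nonempty (hg : IsFuzzyN g) {β : ℝ} (hβ : β ≤ 1) :
    {q | β ≤ g q}.Nonempty := by
  obtain ⟨z, hz⟩ := hg.2.1
  exact ⟨z, by simp [hz, hβ]⟩

lemma levelG_bounded (hg : IsFuzzyN g) {β : ℝ} (hβ : 0 < β) :
    Bornology.IsBounded {q | β ≤ g q} := by
  refine (hg.2.2.isBounded).subset ?_
  intro z hz
  exact subset_closure (lt_of_lt_of_le hβ hz)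

lemma levelG_subset_supp (hg : IsFuzzyN g) {β : ℝ} (hβ : 0 < β) :
    {q | β ≤ g q} ⊆ fsupp g :=
  fun z hz => subset_closure (lt_of_lt_of_le hβ hz)

end Level

section Analytic
variable {X I : Type*} [MetricSpace X] [DecidableEq X] [Finite I] [Nonempty I]
variable {f : I → X → X} {ρ : I → ℝ → ℝ} {C : ℝ}
variable (hρ : Admissible ρ) (hcont : ∀ i, Continuous (f i))
variable (hC0 : 0 ≤ C) (hC1 : C < 1) (horb : OrbitalContr f C)

include hρ in
lemma levelV_nonempty {j : I} (hj : ρ j 1 = 1) {β : ℝ} (hβ : β ≤ 1) (n : ℕ) (z : X) :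
    wmap f (List.replicate n j) z ∈ {q | β ≤ vIt f (ρ := ρ) n z q} := by
  have h := vIt_ge_greyC f hρ (List.replicate n j) z
  rw [greyC_replicate hρ hj, List.length_replicate] at h
  exact le_trans hβ h

include hρ in
lemma levelV_bounded {β : ℝ} (hβ : 0 < β) (n : ℕ) (z : X) :
    Bornology.IsBounded {q | β ≤ vIt f (ρ := ρ) n z q} := by
  refine (Set.Finite.isBounded ?_)
  apply Set.Finite.subset (Set.Finite.image (fun l => wmap f l z) (finiteWords I n))
  intro q hq
  obtain ⟨l, hl, hq', _⟩ := vIt_repr f hρ hβ hq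
  exact ⟨l, hl, hq'⟩

include hρ hC0 hC1 horb in
/-- level-wise convergence from `dInfty` convergence -/
lemma levelConv (x : X) (g : X → ℝ) (hg : IsFuzzyN g)
    (htend : Tendsto (fun n => dInfty ((Zop f ρ)^[n] (fdelta x)) g) atTop (nhds 0))
    {β : ℝ} (hβ : β ∈ Ioc (0:ℝ) 1) {ε : ℝ} (hε : 0 < ε) :
    ∃ N, ∀ n ≥ N, hausdorffDist {q | β ≤ vIt f (ρ := ρ) n x q} {q | β ≤ g q} < ε := by
  obtain ⟨j, hj⟩ := hρ.2.2.2.2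
  obtain ⟨R, hR0, hR⟩ := orbit_bound hC0 hC1 horb x
  obtain ⟨T, hT⟩ := (hg.2.2.isBounded).subset_closedBall x
  obtain ⟨b₀, hb₀⟩ := hg.2.1
  have hb₀s : b₀ ∈ fsupp g := subset_closure (by simp [hb₀])
  have hbd : ∀ n, ∀ α : Ioc (0:ℝ) 1,
      hausdorffDist {q | (α:ℝ) ≤ vIt f (ρ := ρ) n x q} {q | (α:ℝ) ≤ g q} ≤ R + T := by
    intro n α
    have hT0 : dist b₀ x ≤ T := hT hb₀s
    apply hausdorffDist_le_of_mem_dist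
    · have : (0:ℝ) ≤ dist b₀ x := dist_nonneg
      linarith
    · intro a ha
      obtain ⟨l, hl, rfl, _⟩ := vIt_repr f hρ α.2.1 ha
      refine ⟨b₀, by simp [hb₀, α.2.2], ?_⟩
      calc dist (wmap f l x) b₀ ≤ dist (wmap f l x) x + dist x b₀ := dist_triangle _ _ _
        _ ≤ R + T := by
            rw [dist_comm (wmap f l x) x, dist_comm x b₀]; exact add_le_add (hR l) hT0
    · intro b hb
      refine ⟨wmap f (List.replicate n j) x, levelV_nonempty hρ hj α.2.2 n x, ?_⟩
      have hbs : b ∈ fsupp g := levelG_subset_supp hg α.2.1 hb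
      calc dist b (wmap f (List.replicate n j) x)
          ≤ dist b x + dist x (wmap f (List.replicate n j) x) := dist_triangle _ _ _
        _ ≤ T + R := add_le_add (hT hbs) (hR _)
        _ = R + T := by ring
  have hev : ∀ᶠ n in atTop, dInfty ((Zop f ρ)^[n] (fdelta x)) g < ε :=
    htend.eventually_lt_const hε
  obtain ⟨N, hN⟩ := eventually_atTop.1 hev
  refine ⟨N, fun n hn => ?_⟩
  have hle : hausdorffDist {q | β ≤ vIt f (ρ := ρ) n x q} {q | β ≤ g q}
      ≤ dInfty ((Zop f ρ)^[n] (fdelta x)) g := by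
    have := le_ciSup (f := fun α : Ioc (0:ℝ) 1 =>
      hausdorffDist {q | (α:ℝ) ≤ (Zop f ρ)^[n] (fdelta x) q} {q | (α:ℝ) ≤ g q})
      (⟨R + T, by rintro r ⟨α, rfl⟩; exact hbd n α⟩) ⟨β, hβ⟩
    exact this
  exact lt_of_le_of_lt hle (hN n hn)

end Analytic

section Core
variable {X I : Type*} [MetricSpace X] [DecidableEq X] [Finite I] [Nonempty I]
variable {f : I → X → X} {ρ : I → ℝ → ℝ} {C : ℝ}
variable (hρ : Admissible ρ) (hcont : ∀ i, Continuous (f i))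
variable (hC0 : 0 ≤ C) (hC1 : C < 1) (horb : OrbitalContr f C)

include hρ hcont hC0 hC1 horb in
/-- Core estimate: the level sets of `g = U x` are `C^k`-close to those of the
iterates started at any point `y` in the open support of `g`. -/
lemma core_estimate (x y : X) (g : X → ℝ) (hgN : IsFuzzyN g)
    (htend : Tendsto (fun n => dInfty ((Zop f ρ)^[n] (fdelta x)) g) atTop (nhds 0))
    (hy : 0 < g y) :
    ∃ D, 0 ≤ D ∧ ∀ β ∈ Ioc (0:ℝ) 1, ∀ k : ℕ,
      hausdorffDist {q | β ≤ vIt f (ρ := ρ) k y q} {q | β ≤ g q} ≤ C ^ k * D := by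
  obtain ⟨j, hj⟩ := hρ.2.2.2.2
  obtain ⟨D, hD0, hD⟩ := orbit_pair_bound hC0 hC1 horb x
  refine ⟨D, hD0, ?_⟩
  intro β hβ k
  have hCk : (0:ℝ) ≤ C ^ k := pow_nonneg hC0 k
  refine le_of_forall_pos_le_add ?_
  intro ε hε
  have hε2 : 0 < ε / 2 := by linarith
  -- uniform continuity over words of length k
  obtain ⟨δ, hδ0, hδ⟩ := cont_unif hcont y {l : List I | l.length = k} (finiteWords I k) hε2
  set γ := g y with hγdef
  have hγ : γ ∈ Ioc (0:ℝ) 1 := ⟨hy, (hgN.1 y).2⟩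
  obtain ⟨N₁, hN₁⟩ := levelConv hρ hC0 hC1 horb x g hgN htend hγ hδ0
  obtain ⟨N₂, hN₂⟩ := levelConv hρ hC0 hC1 horb x g hgN htend hβ hε2
  set n := max N₁ N₂ with hndef
  -- find p in the orbit of x close to y
  have hdγ := hN₁ n (le_max_left _ _)
  have finγ : EMetric.hausdorffEdist {q | γ ≤ vIt f (ρ := ρ) n x q} {q | γ ≤ g q} ≠ ⊤ :=
    hausdorffEdist_ne_top_of_nonempty_of_bounded
      ⟨_, levelV_nonempty hρ hj hγ.2 n x⟩ (levelG_nonempty hgN hγ.2)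
      (levelV_bounded hρ hγ.1 n x) (levelG_bounded hgN hγ.1)
  obtain ⟨p, hp, hpy⟩ := exists_dist_lt_of_hausdorffDist_lt' (show y ∈ {q | γ ≤ g q} from le_refl γ)
    hdγ finγ
  obtain ⟨η, hη, hpx, _⟩ := vIt_repr f hρ hγ.1 hp
  have hporb : p ∈ orbitIFS f x := hpx ▸ wmap_mem_orbit f η x
  have hyp : dist y p < δ := by rw [dist_comm]; exact hpy
  -- the four sets
  set A := {q | β ≤ vIt f (ρ := ρ) k y q} with hA
  set B := {q | β ≤ vIt f (ρ := ρ) k p q} with hB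
  set Cs := {q | β ≤ vIt f (ρ := ρ) (k + n) x q} with hCs
  set E := {q | β ≤ g q} with hE
  have hAne : A.Nonempty := ⟨_, levelV_nonempty hρ hj hβ.2 k y⟩
  have hBne : B.Nonempty := ⟨_, levelV_nonempty hρ hj hβ.2 k p⟩
  have hCne : Cs.Nonempty := ⟨_, levelV_nonempty hρ hj hβ.2 (k + n) x⟩
  have hEne : E.Nonempty := levelG_nonempty hgN hβ.2
  have hAbd := levelV_bounded (f := f) hρ hβ.1 k y
  have hBbd := levelV_bounded (f := f) hρ hβ.1 k p
  have hCbd := levelV_bounded (f := f) hρ hβ.1 (k + n) x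
  have hEbd := levelG_bounded hgN hβ.1
  -- A is ε/2-close to B
  have hAB : hausdorffDist A B ≤ ε / 2 := by
    apply hausdorffDist_le_of_mem_dist hε2.le
    · intro a ha
      obtain ⟨τ, hτ, rfl, hcτ⟩ := vIt_repr f hρ hβ.1 ha
      refine ⟨wmap f τ p, ?_, (hδ p hyp τ hτ).le⟩
      have := vIt_ge_greyC f hρ τ p
      rw [hτ] at this
      exact le_trans hcτ this
    · intro b hb
      obtain ⟨τ, hτ, rfl, hcτ⟩ := vIt_repr f hρ hβ.1 hb
      refine ⟨wmap f τ y, ?_, ?_⟩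
      · have := vIt_ge_greyC f hρ τ y
        rw [hτ] at this
        exact le_trans hcτ this
      · rw [dist_comm]; exact (hδ p hyp τ hτ).le
  -- B is C^k * D-close to Cs
  have hBC : hausdorffDist B Cs ≤ C ^ k * D := by
    apply hausdorffDist_le_of_mem_dist (by positivity)
    · intro b hb
      obtain ⟨τ, hτ, rfl, hcτ⟩ := vIt_repr f hρ hβ.1 hb
      refine ⟨wmap f (τ ++ List.replicate n j) x, ?_, ?_⟩
      · have hlen : (τ ++ List.replicate n j).length = k + n := by
          simp [hτ]
        have h1 := vIt_ge_greyC f hρ (τ ++ List.replicate n j) x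
        rw [hlen, greyC_append_one hρ _ _ (greyC_replicate hρ hj n)] at h1
        exact le_trans hcτ h1
      · rw [wmap_append]
        have hcontr := wmap_contract hC0 horb x τ hporb (wmap_mem_orbit f (List.replicate n j) x)
        rw [hτ] at hcontr
        exact le_trans hcontr (mul_le_mul_of_nonneg_left
          (hD p hporb _ (wmap_mem_orbit f _ x)) hCk)
    · intro c hc
      obtain ⟨π, hπ, rfl, hcπ⟩ := vIt_repr f hρ hβ.1 hc
      have hsplit : π = π.take k ++ π.drop k := (List.take_append_drop k π).symm
      have htk : (π.take k).length = k := by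
        rw [List.length_take, hπ]; exact min_eq_left (Nat.le_add_right _ _)
      have hcτ : β ≤ greyC ρ (π.take k) := by
        refine le_trans hcπ ?_
        conv_lhs => rw [hsplit]
        exact greyC_append_le hρ _ _
      refine ⟨wmap f (π.take k) p, ?_, ?_⟩
      · have := vIt_ge_greyC f hρ (π.take k) p
        rw [htk] at this
        exact le_trans hcτ this
      · have heq : wmap f π x = wmap f (π.take k) (wmap f (π.drop k) x) := by
          conv_lhs => rw [hsplit]
          rw [wmap_append]
        rw [heq]
        have hcontr := wmap_contract hC0 horb x (π.take k)
          (wmap_mem_orbit f (π.drop k) x) hporb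
        rw [htk] at hcontr
        exact le_trans hcontr (mul_le_mul_of_nonneg_left
          (hD _ (wmap_mem_orbit f _ x) p hporb) hCk)
  -- Cs is ε/2-close to E
  have hCE : hausdorffDist Cs E ≤ ε / 2 := (hN₂ (k + n) (le_trans (le_max_right _ _)
    (Nat.le_add_left _ _))).le
  -- triangle inequalities
  have finAB : EMetric.hausdorffEdist A B ≠ ⊤ :=
    hausdorffEdist_ne_top_of_nonempty_of_bounded hAne hBne hAbd hBbd
  have finBC : EMetric.hausdorffEdist B Cs ≠ ⊤ :=
    hausdorffEdist_ne_top_of_nonempty_of_bounded hBne hCne hBbd hCbd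
  calc hausdorffDist A E ≤ hausdorffDist A B + hausdorffDist B E :=
        hausdorffDist_triangle finAB
    _ ≤ hausdorffDist A B + (hausdorffDist B Cs + hausdorffDist Cs E) := by
        have := hausdorffDist_triangle (s := B) (t := Cs) (u := E) finBC
        linarith
    _ ≤ ε / 2 + (C ^ k * D + ε / 2) := by linarith
    _ = C ^ k * D + ε := by ring

end Core


section Coherence
variable {X I : Type*} [MetricSpace X] [DecidableEq X] [Finite I] [Nonempty I]
variable {f : I → X → X} {ρ : I → ℝ → ℝ} {C : ℝ}
variable (hρ : Admissible ρ) (hcont : ∀ i, Continuous (f i))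
variable (hC0 : 0 ≤ C) (hC1 : C < 1) (horb : OrbitalContr f C)

include hρ hcont hC0 hC1 horb in
/-- Coherence: two limit fuzzy sets whose supports share a point have equal level sets. -/
lemma coherence (x₁ x₂ y : X) (g₁ g₂ : X → ℝ)
    (hg₁ : IsFuzzyStar g₁) (hg₂ : IsFuzzyStar g₂)
    (ht₁ : Tendsto (fun n => dInfty ((Zop f ρ)^[n] (fdelta x₁)) g₁) atTop (nhds 0))
    (ht₂ : Tendsto (fun n => dInfty ((Zop f ρ)^[n] (fdelta x₂)) g₂) atTop (nhds 0))
    (hy₁ : 0 < g₁ y) (hy₂ : 0 < g₂ y) {β : ℝ} (hβ : β ∈ Ioc (0:ℝ) 1) :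
    {z | β ≤ g₁ z} = {z | β ≤ g₂ z} := by
  obtain ⟨j, hj⟩ := hρ.2.2.2.2
  obtain ⟨D₁, hD₁0, hD₁⟩ := core_estimate hρ hcont hC0 hC1 horb x₁ y g₁ hg₁.1 ht₁ hy₁
  obtain ⟨D₂, hD₂0, hD₂⟩ := core_estimate hρ hcont hC0 hC1 horb x₂ y g₂ hg₂.1 ht₂ hy₂
  have hEne₁ : {z | β ≤ g₁ z}.Nonempty := levelG_nonempty hg₁.1 hβ.2
  have hEne₂ : {z | β ≤ g₂ z}.Nonempty := levelG_nonempty hg₂.1 hβ.2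
  have hEbd₁ := levelG_bounded hg₁.1 hβ.1
  have hEbd₂ := levelG_bounded hg₂.1 hβ.1
  have key : ∀ k : ℕ, hausdorffDist {z | β ≤ g₁ z} {z | β ≤ g₂ z} ≤ C ^ k * (D₁ + D₂) := by
    intro k
    have hAne : {q | β ≤ vIt f (ρ := ρ) k y q}.Nonempty := ⟨_, levelV_nonempty hρ hj hβ.2 k y⟩
    have hAbd := levelV_bounded (f := f) hρ hβ.1 k y
    have fin1 : EMetric.hausdorffEdist {z | β ≤ g₁ z} {q | β ≤ vIt f (ρ := ρ) k y q} ≠ ⊤ :=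
      hausdorffEdist_ne_top_of_nonempty_of_bounded hEne₁ hAne hEbd₁ hAbd
    calc hausdorffDist {z | β ≤ g₁ z} {z | β ≤ g₂ z}
        ≤ hausdorffDist {z | β ≤ g₁ z} {q | β ≤ vIt f (ρ := ρ) k y q}
          + hausdorffDist {q | β ≤ vIt f (ρ := ρ) k y q} {z | β ≤ g₂ z} :=
          hausdorffDist_triangle fin1
      _ ≤ C ^ k * D₁ + C ^ k * D₂ := by
          have h1 := hD₁ β hβ k
          have h2 := hD₂ β hβ k
          rw [hausdorffDist_comm]
          linarith
      _ = C ^ k * (D₁ + D₂) := by ring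
  have hzero : hausdorffDist {z | β ≤ g₁ z} {z | β ≤ g₂ z} = 0 := by
    have htend0 : Tendsto (fun k : ℕ => C ^ k * (D₁ + D₂)) atTop (nhds 0) := by
      simpa using (tendsto_pow_atTop_nhds_zero_of_lt_one hC0 hC1).mul_const (D₁ + D₂)
    have hle0 : hausdorffDist {z | β ≤ g₁ z} {z | β ≤ g₂ z} ≤ 0 :=
      ge_of_tendsto htend0 (Eventually.of_forall key)
    exact le_antisymm hle0 hausdorffDist_nonneg
  have hclosed₁ : IsClosed {z | β ≤ g₁ z} := hg₁.2.isClosed_preimage β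
  have hclosed₂ : IsClosed {z | β ≤ g₂ z} := hg₂.2.isClosed_preimage β
  have fin : EMetric.hausdorffEdist {z | β ≤ g₁ z} {z | β ≤ g₂ z} ≠ ⊤ :=
    hausdorffEdist_ne_top_of_nonempty_of_bounded hEne₁ hEne₂ hEbd₁ hEbd₂
  exact (hclosed₁.hausdorffDist_zero_iff_eq hclosed₂ fin).1 hzero

end Coherence


/-- Proposition 3.4: the α-level set of `∨_{x ∈ [u]^*} u_x` is the
union of the α-level sets. -/
theorem stmt9 {X I : Type*} [MetricSpace X] [CompleteSpace X] [DecidableEq X]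
    [Finite I] [Nonempty I]
    (f : I → X → X) (hcont : ∀ i, Continuous (f i))
    (C : ℝ) (hC0 : 0 ≤ C) (hC1 : C < 1) (horb : OrbitalContr f C)
    (ρ : I → ℝ → ℝ) (hρ : Admissible ρ)
    (u : X → ℝ) (hu : InFS f u)
    (U : X → X → ℝ) (hUStar : ∀ x, 0 < u x → InFS f (U x))
    (hU : ∀ x, 0 < u x →
      Tendsto (fun n => dInfty ((Zop f ρ)^[n] (fdelta x)) (U x)) atTop (nhds 0)) :
    ∀ α ∈ Ioc (0:ℝ) 1,
      {y | α ≤ ⨆ x : {x // 0 < u x}, U x.1 y} =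
        ⋃ x : {x // 0 < u x}, {y | α ≤ U x.1 y} := by
  intro α hα
  have hsub : Nonempty {x // 0 < u x} := by
    obtain ⟨x₀, hx₀⟩ := hu.1.1.2.1
    exact ⟨⟨x₀, by rw [hx₀]; exact one_pos⟩⟩
  ext y
  simp only [Set.mem_setOf_eq, Set.mem_iUnion]
  have hbdd : BddAbove (Set.range fun x : {x // 0 < u x} => U x.1 y) :=
    ⟨1, by rintro r ⟨x, rfl⟩; exact ((hUStar x.1 x.2).1.1.1 y).2⟩
  constructor
  · intro h
    have hS : 0 < ⨆ x : {x // 0 < u x}, U x.1 y := lt_of_lt_of_le hα.1 h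
    have hex : ∃ x : {x // 0 < u x}, 0 < U x.1 y := by
      by_contra hc
      push_neg at hc
      have : (⨆ x : {x // 0 < u x}, U x.1 y) ≤ 0 := ciSup_le hc
      linarith
    obtain ⟨x₁, hx₁⟩ := hex
    refine ⟨x₁, ?_⟩
    have hub : ∀ x : {x // 0 < u x}, U x.1 y ≤ U x₁.1 y := by
      intro x
      rcases le_or_gt (U x.1 y) 0 with h0 | h0
      · exact le_trans h0 hx₁.le
      · have hβ : U x.1 y ∈ Ioc (0:ℝ) 1 := ⟨h0, ((hUStar x.1 x.2).1.1.1 y).2⟩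
        have hlev := coherence hρ hcont hC0 hC1 horb x.1 x₁.1 y (U x.1) (U x₁.1)
          (hUStar x.1 x.2).1 (hUStar x₁.1 x₁.2).1 (hU x.1 x.2) (hU x₁.1 x₁.2) h0 hx₁ hβ
        have hmem : y ∈ {z | U x.1 y ≤ U x.1 z} := Set.mem_setOf_eq ▸ le_refl (U x.1 y)
        rw [hlev] at hmem
        exact hmem
    exact le_trans h (ciSup_le hub)
  · rintro ⟨x, hx⟩
    exact le_trans hx (le_ciSup hbdd x)
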